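/- Let S be a finite set of n sites, given by an injective position map pos : S → ℝ and a weight function w : S → ℝ with w(p) ≥ 0 for all p ∈ S. Then there exists a set E of unordered pairs of distinct sites with |E| ≤ n·(⌊log₂ n⌋ + 1) such that for all distinct p, q ∈ S there exist sites x₀ = p, x₁, …, x_j = q with 1 ≤ j ≤ 2, each consecutive pair {x_i, x_{i+1}} belonging to E, and ∑_{i=0}^{j−1} d_w(x_i, x_{i+1}) ≤ 2·d_w(p, q). -/

import Mathlib

/-- The additively weighted distance between two sites on the real line:
`d_w(p, q) = w(p) + |pos(p) − pos(q)| + w(q)`. -/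
def dw {S : Type*} (pos : S → ℝ) (w : S → ℝ) (p q : S) : ℝ :=
  w p + |pos p - pos q| + w q

private lemma dw_nonneg {S : Type*} (pos w : S → ℝ) (hw : ∀ p, 0 ≤ w p) (p q : S) :
    0 ≤ dw pos w p q := by
  have h := abs_nonneg (pos p - pos q)
  have h1 := hw p; have h2 := hw q
  unfold dw; linarith

private lemma dw_comm {S : Type*} (pos w : S → ℝ) (p q : S) :
    dw pos w p q = dw pos w q p := by
  unfold dw; rw [abs_sub_comm]; ring

private lemma center_ok {S : Type*} (pos w : S → ℝ) (p q r : S) (s : ℝ)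
    (hps : pos p ≤ s) (hsq : s ≤ pos q)
    (hrp : w r + |pos r - s| ≤ w p + |pos p - s|)
    (hrq : w r + |pos r - s| ≤ w q + |pos q - s|) :
    dw pos w p r + dw pos w r q ≤ 2 * dw pos w p q := by
  have t1 : |pos p - pos r| ≤ |pos p - s| + |s - pos r| := abs_sub_le _ _ _
  have t2 : |pos r - pos q| ≤ |pos r - s| + |s - pos q| := abs_sub_le _ _ _
  have e1 : |pos p - s| = s - pos p := by
    rw [abs_sub_comm]; exact abs_of_nonneg (by linarith)
  have e2 : |pos q - s| = pos q - s := abs_of_nonneg (by linarith)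
  have e3 : |s - pos r| = |pos r - s| := abs_sub_comm _ _
  have e4 : |s - pos q| = |pos q - s| := abs_sub_comm _ _
  have e5 : |pos p - pos q| = pos q - pos p := by
    rw [abs_sub_comm]; exact abs_of_nonneg (by linarith)
  unfold dw
  linarith [t1, t2, e1, e2, e3, e4, e5, hrp, hrq]

/-- Main recursive construction on a position-sorted list, with fuel `d`. -/
private lemma build {S : Type*} [DecidableEq S] (pos w : S → ℝ) (hw : ∀ p, 0 ≤ w p) :
    ∀ (d : ℕ) (l : List S), l.Pairwise (fun x y => pos x ≤ pos y) →
    ∃ E : Finset (Sym2 S), (∀ e ∈ E, ¬ e.IsDiag) ∧ E.card ≤ d * l.length ∧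
      (l.length ≤ 2 ^ d → ∀ p ∈ l, ∀ q ∈ l, p ≠ q →
        ∃ (j : ℕ) (x : ℕ → S), 1 ≤ j ∧ j ≤ 2 ∧ x 0 = p ∧ x j = q ∧
          (∀ i < j, s(x i, x (i + 1)) ∈ E) ∧
          (∑ i ∈ Finset.range j, dw pos w (x i) (x (i + 1))) ≤ 2 * dw pos w p q) := by
  intro d
  induction d with
  | zero =>
    intro l _
    refine ⟨∅, by simp, by simp, ?_⟩
    intro hlen p hp q hq hpq
    exfalso
    rcases l with _ | ⟨c, _ | ⟨e, t⟩⟩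
    · simp at hp
    · simp at hp hq; subst hp; subst hq; exact hpq rfl
    · simp at hlen
  | succ d ih =>
    intro l hsort
    by_cases hl1 : l.length ≤ 1
    · refine ⟨∅, by simp, by simp, ?_⟩
      intro _ p hp q hq hpq
      exfalso
      rcases l with _ | ⟨c, _ | ⟨e, t⟩⟩
      · simp at hp
      · simp at hp hq; subst hp; subst hq; exact hpq rfl
      · simp at hl1
    · push_neg at hl1
      set k := l.length / 2 with hk
      set a := l.take k with ha
      set b := l.drop k with hb
      have hkle : k ≤ l.length := Nat.div_le_self _ _
      have hlab : a ++ b = l := List.take_append_drop k l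
      have hlena : a.length = k := by
        rw [ha, List.length_take]; omega
      have hlenb : b.length = l.length - k := by rw [hb, List.length_drop]
      have hbne : b ≠ [] := by
        have : 0 < b.length := by omega
        exact List.length_pos_iff.mp this
      have hane : a ≠ [] := by
        have : 0 < a.length := by omega
        exact List.length_pos_iff.mp this
      have hsa : a.Pairwise (fun x y => pos x ≤ pos y) :=
        hsort.sublist (List.take_sublist k l)
      have hsb : b.Pairwise (fun x y => pos x ≤ pos y) :=
        hsort.sublist (List.drop_sublist k l)
      have hab : ∀ x ∈ a, ∀ y ∈ b, pos x ≤ pos y := by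
        have := List.pairwise_append.mp (by rw [hlab]; exact hsort)
        exact this.2.2
      obtain ⟨E₁, hE₁d, hE₁c, hE₁p⟩ := ih a hsa
      obtain ⟨E₂, hE₂d, hE₂c, hE₂p⟩ := ih b hsb
      set q₀ := b.head hbne with hq₀
      have hq₀b : q₀ ∈ b := List.head_mem hbne
      set s : ℝ := pos q₀ with hs
      have hlne : l ≠ [] := by
        intro h; rw [h] at hl1; simp at hl1
      have hlf : l.toFinset.Nonempty := by
        rcases List.exists_mem_of_ne_nil l hlne with ⟨x, hx⟩
        exact ⟨x, List.mem_toFinset.mpr hx⟩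
      obtain ⟨r, hrl, hrmin⟩ := Finset.exists_min_image l.toFinset
        (fun x => w x + |pos x - s|) hlf
      have hrmin' : ∀ x ∈ l, w r + |pos r - s| ≤ w x + |pos x - s| := by
        intro x hx; exact hrmin x (List.mem_toFinset.mpr hx)
      set star : Finset (Sym2 S) :=
        ((l.filter (fun x => x ≠ r)).map (fun x => s(x, r))).toFinset with hstar
      have hstarmem : ∀ x ∈ l, x ≠ r → s(x, r) ∈ star := by
        intro x hx hxr
        rw [hstar]
        apply List.mem_toFinset.mpr
        exact List.mem_map.mpr ⟨x, List.mem_filter.mpr ⟨hx, by simpa using hxr⟩, rfl⟩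
      refine ⟨E₁ ∪ E₂ ∪ star, ?_, ?_, ?_⟩
      · -- non-diagonal
        intro e he
        rcases Finset.mem_union.mp he with he | he
        · rcases Finset.mem_union.mp he with he | he
          · exact hE₁d e he
          · exact hE₂d e he
        · rw [hstar] at he
          obtain ⟨x, hx, rfl⟩ := List.mem_map.mp (List.mem_toFinset.mp he)
          have : x ≠ r := by simpa using (List.mem_filter.mp hx).2
          simpa [Sym2.mk_isDiag_iff] using this
      · -- cardinality
        have h1 : (E₁ ∪ E₂ ∪ star).card ≤ E₁.card + E₂.card + star.card := by
          calc (E₁ ∪ E₂ ∪ star).card ≤ (E₁ ∪ E₂).card + star.card :=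
                Finset.card_union_le _ _
            _ ≤ E₁.card + E₂.card + star.card := by
                have := Finset.card_union_le E₁ E₂; omega
        have h2 : star.card ≤ l.length := by
          calc star.card ≤ (l.filter (fun x => x ≠ r)).length := by
                rw [hstar]
                have := List.toFinset_card_le ((l.filter (fun x => x ≠ r)).map
                  (fun x => s(x, r)))
                simpa using this
            _ ≤ l.length := List.length_filter_le _ _
        have h3 : E₁.card + E₂.card ≤ d * k + d * (l.length - k) := by
          have := hE₁c; have := hE₂c
          rw [hlena] at hE₁c; rw [hlenb] at hE₂c; omega
        have h4 : d * k + d * (l.length - k) = d * l.length := by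
          rw [← Nat.mul_add]; congr 1; omega
        calc (E₁ ∪ E₂ ∪ star).card ≤ E₁.card + E₂.card + star.card := h1
          _ ≤ d * k + d * (l.length - k) + l.length := by omega
          _ = (d + 1) * l.length := by rw [h4]; ring
      · -- spanner property
        intro hlen p hp q hq hpq
        have hpow : 2 ^ (d + 1) = 2 * 2 ^ d := by ring
        have hmem : ∀ x ∈ l, x ∈ a ∨ x ∈ b := by
          intro x hx; rw [← hlab] at hx; exact List.mem_append.mp hx
        have hupg : ∀ e ∈ E₁ ∪ E₂, e ∈ E₁ ∪ E₂ ∪ star := fun e he =>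
          Finset.mem_union_left _ he
        -- helper: lift a path from a sub-edge-set
        have hbhead : ∀ y ∈ b, s ≤ pos y := by
          intro y hy
          rw [← List.cons_head_tail hbne] at hy hsb
          rcases List.mem_cons.mp hy with rfl | hy'
          · exact le_refl _
          · exact (List.pairwise_cons.mp hsb).1 y hy'
        -- the two-hop path through r for a crossing pair (u ∈ a, v ∈ b)
        have cross : ∀ u v : S, u ∈ l → v ∈ l → u ≠ v →
            dw pos w u r + dw pos w r v ≤ 2 * dw pos w u v →
            ∃ (j : ℕ) (x : ℕ → S), 1 ≤ j ∧ j ≤ 2 ∧ x 0 = u ∧ x j = v ∧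
              (∀ i < j, s(x i, x (i + 1)) ∈ E₁ ∪ E₂ ∪ star) ∧
              (∑ i ∈ Finset.range j, dw pos w (x i) (x (i + 1))) ≤
                2 * dw pos w u v := by
          intro u v hu hv huv hineq
          by_cases hur : u = r
          · -- direct edge u = r : edge s(v, r)
            refine ⟨1, fun i => if i = 0 then u else v, le_refl _, by norm_num,
              by norm_num, by norm_num, ?_, ?_⟩
            · intro i hi
              interval_cases i
              have : s(v, r) ∈ star := hstarmem v hv (by rw [← hur]; exact huv.symm)
              norm_num
              rw [Sym2.eq_swap, hur]
              exact Or.inr (Or.inr this)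
            · rw [Finset.sum_range_one]
              norm_num
              have := dw_nonneg pos w hw u v
              linarith
          · by_cases hvr : v = r
            · refine ⟨1, fun i => if i = 0 then u else v, le_refl _, by norm_num,
                by norm_num, by norm_num, ?_, ?_⟩
              · intro i hi
                interval_cases i
                have : s(u, r) ∈ star := hstarmem u hu hur
                norm_num
                rw [hvr]
                exact Or.inr (Or.inr this)
              · rw [Finset.sum_range_one]
                norm_num
                have := dw_nonneg pos w hw u v
                linarith
            · refine ⟨2, fun i => if i = 0 then u else if i = 1 then r else v,
                by norm_num, le_refl _, by norm_num, by norm_num, ?_, ?_⟩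
              · intro i hi
                interval_cases i
                · have : s(u, r) ∈ star := hstarmem u hu hur
                  norm_num
                  exact Or.inr (Or.inr this)
                · have : s(v, r) ∈ star := hstarmem v hv hvr
                  norm_num
                  rw [Sym2.eq_swap]
                  exact Or.inr (Or.inr this)
              · rw [Finset.sum_range_succ, Finset.sum_range_one]
                norm_num
                linarith [hineq]
        rcases hmem p hp with hpa | hpb
        · rcases hmem q hq with hqa | hqb
          · -- both in a
            have hlena' : a.length ≤ 2 ^ d := by omega
            obtain ⟨j, x, h1, h2, h3, h4, h5, h6⟩ := hE₁p hlena' p hpa q hqa hpq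
            exact ⟨j, x, h1, h2, h3, h4,
              fun i hi => hupg _ (Finset.mem_union_left _ (h5 i hi)), h6⟩
          · -- p ∈ a, q ∈ b : crossing
            have hps : pos p ≤ s := hab p hpa q₀ hq₀b
            have hsq : s ≤ pos q := hbhead q hqb
            exact cross p q hp hq hpq
              (center_ok pos w p q r s hps hsq (hrmin' p hp) (hrmin' q hq))
        · rcases hmem q hq with hqa | hqb
          · -- p ∈ b, q ∈ a : crossing, reversed
            have hqs : pos q ≤ s := hab q hqa q₀ hq₀b
            have hsp : s ≤ pos p := hbhead p hpb
            have hkey := center_ok pos w q p r s hqs hsp (hrmin' q hq) (hrmin' p hp)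
            have hineq : dw pos w p r + dw pos w r q ≤ 2 * dw pos w p q := by
              rw [dw_comm pos w p r, dw_comm pos w r q, dw_comm pos w p q]
              linarith [hkey, dw_comm pos w q r, dw_comm pos w r p]
            exact cross p q hp hq hpq hineq
          · -- both in b
            have hlenb' : b.length ≤ 2 ^ d := by omega
            obtain ⟨j, x, h1, h2, h3, h4, h5, h6⟩ := hE₂p hlenb' p hpb q hqb hpq
            exact ⟨j, x, h1, h2, h3, h4,
              fun i hi => hupg _ (Finset.mem_union_right _ (h5 i hi)), h6⟩

private lemma clog_le_log_succ (n : ℕ) : Nat.clog 2 n ≤ Nat.log 2 n + 1 := by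
  rcases Nat.eq_zero_or_pos n with rfl | hn
  · simp
  · exact (Nat.clog_le_iff_le_pow (by norm_num)).mpr
      (Nat.lt_pow_succ_log_self (by norm_num) n).le

/-- Existence of a 1-dimensional additively weighted 2-spanner of size
`O(n log n)` in which every pair of sites is joined by a path of at most
two edges, of total weighted length at most `2 · d_w(p, q)`. -/
theorem one_dim_weighted_two_spanner
    (S : Type*) [Fintype S] [DecidableEq S] (n : ℕ) (hn : Fintype.card S = n)
    (pos : S → ℝ) (hpos : Function.Injective pos)
    (w : S → ℝ) (hw : ∀ p, 0 ≤ w p) :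
    ∃ E : Finset (Sym2 S),
      (∀ e ∈ E, ¬ e.IsDiag) ∧
      E.card ≤ n * (Nat.log 2 n + 1) ∧
      ∀ p q : S, p ≠ q →
        ∃ (j : ℕ) (x : ℕ → S), 1 ≤ j ∧ j ≤ 2 ∧ x 0 = p ∧ x j = q ∧
          (∀ i < j, s(x i, x (i + 1)) ∈ E) ∧
          (∑ i ∈ Finset.range j, dw pos w (x i) (x (i + 1))) ≤ 2 * dw pos w p q := by
  classical
  set R : S → S → Prop := fun x y => pos x ≤ pos y with hR
  letI : DecidableRel R := fun a b => Classical.dec _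
  haveI : IsTrans S R := ⟨fun a b c hab hbc => le_trans hab hbc⟩
  haveI : IsAntisymm S R := ⟨fun a b h1 h2 => hpos (le_antisymm h1 h2)⟩
  haveI : IsTotal S R := ⟨fun a b => le_total _ _⟩
  set l : List S := Finset.univ.sort R with hl
  have hsort : l.Pairwise (fun x y => pos x ≤ pos y) := Finset.pairwise_sort _ R
  have hlen : l.length = n := by
    rw [hl, Finset.length_sort, Finset.card_univ, hn]
  obtain ⟨E, hEd, hEc, hEp⟩ := build pos w hw (Nat.clog 2 n) l hsort
  refine ⟨E, hEd, ?_, ?_⟩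
  · calc E.card ≤ Nat.clog 2 n * l.length := hEc
      _ = n * Nat.clog 2 n := by rw [hlen, Nat.mul_comm]
      _ ≤ n * (Nat.log 2 n + 1) := Nat.mul_le_mul_left n (clog_le_log_succ n)
  · intro p q hpq
    have hmem : ∀ x : S, x ∈ l := fun x =>
      (Finset.mem_sort R).mpr (Finset.mem_univ x)
    exact hEp (by rw [hlen]; exact Nat.le_pow_clog (by norm_num) n)
      p (hmem p) q (hmem q) hpq
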